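/- Let V be a finite type, E ⊆ V × V an edge set, w : V → V → ℝ≥0∞ a weight function, a, b ∈ V, and let E' = E ∪ {(a, b)}. Then for every source s and every vertex y, cost_{E'}(s, y) = min( cost_E(s, y), cost_E(s, a) + w(a, b) + cost_E(b, y) ). (This characterizes the effect of the insert_edge_SSSP operation used by LBT-RRT: after inserting a single edge (a, b), the new shortest-path cost to each node is the minimum of its old cost and the cost of the best path that passes through the new edge, and in particular the set of nodes whose cost decreases is exactly the set where the second term is strictly smaller.) -/

import Mathlib

open scoped ENNReal

/-- The cost of a path starting at `u` and continuing through the list of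
vertices `p`, summing the weights of consecutive edges. -/
noncomputable def pathCost {V : Type*} (w : V → V → ℝ≥0∞) : V → List V → ℝ≥0∞
  | _, [] => 0
  | u, v :: rest => w u v + pathCost w v rest

/-- `p` is the (tail of a) path in the edge set `E` from `s` to `x`:
consecutive vertices of `s :: p` are edges of `E` and the last vertex is `x`. -/
def IsPathIn {V : Type*} (E : Set (V × V)) (s x : V) (p : List V) : Prop :=
  List.Chain (fun a b => (a, b) ∈ E) s p ∧ (s :: p).getLast (List.cons_ne_nil s p) = x

/-- The shortest-path cost from `s` to `x` in the graph with edge set `E`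
and weights `w`: the infimum in `ℝ≥0∞` of path costs over all paths from `s`
to `x` (so `∞` if no path exists, and `0` from `s` to `s` via the empty path). -/
noncomputable def spCost {V : Type*} (E : Set (V × V)) (w : V → V → ℝ≥0∞)
    (s x : V) : ℝ≥0∞ :=
  ⨅ p : { p : List V // IsPathIn E s x p }, pathCost w s p.val

lemma pathCost_append {V : Type*} (w : V → V → ℝ≥0∞) :
    ∀ (q : List V) (s : V) (r : List V),
      pathCost w s (q ++ r) = pathCost w s q + pathCost w ((s :: q).getLast (by simp)) r
  | [], s, r => by simp [pathCost]
  | u :: q', s, r => by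
      show w s u + pathCost w u (q' ++ r) =
        (w s u + pathCost w u q') + pathCost w ((u :: q').getLast (by simp)) r
      rw [pathCost_append w q' u r, add_assoc]

lemma chain_snoc {V : Type*} (R : V → V → Prop) :
    ∀ (q : List V) (s b : V), List.Chain R s q → R ((s :: q).getLast (by simp)) b →
      List.Chain R s (q ++ [b])
  | [], s, b, _, hR => by simpa using List.Chain.cons (by simpa using hR) List.Chain.nil
  | u :: q', s, b, hc, hR => by
      rcases List.chain_cons.1 hc with ⟨h1, h2⟩
      refine List.chain_cons.2 ⟨h1, chain_snoc R q' u b h2 ?_⟩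
      rwa [List.getLast_cons (List.cons_ne_nil u q')] at hR

lemma chain_decomp {V : Type*} (E : Set (V × V)) (a b : V) :
    ∀ (p : List V) (s : V), List.Chain (fun x y => (x, y) ∈ E ∪ {(a, b)}) s p →
      List.Chain (fun x y => (x, y) ∈ E) s p ∨
      ∃ q r, p = q ++ b :: r ∧ List.Chain (fun x y => (x, y) ∈ E) s q ∧
        (s :: q).getLast (by simp) = a ∧
        List.Chain (fun x y => (x, y) ∈ E ∪ {(a, b)}) b r := by
  intro p
  induction p with
  | nil => intro s _; left; exact List.Chain.nil
  | cons v rest ih =>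
    intro s h
    rcases List.chain_cons.1 h with ⟨hsv, hrest⟩
    rcases hsv with hE | hab
    · rcases ih v hrest with hc | ⟨q, r, rfl, hq, hla, hr⟩
      · left; exact List.chain_cons.2 ⟨hE, hc⟩
      · right
        refine ⟨v :: q, r, rfl, List.chain_cons.2 ⟨hE, hq⟩, ?_, hr⟩
        rwa [List.getLast_cons (List.cons_ne_nil v q)]
    · have hab' : s = a ∧ v = b := by
        simpa [Prod.ext_iff] using hab
      right
      obtain ⟨rfl, rfl⟩ := hab'
      exact ⟨[], rest, rfl, List.Chain.nil, by simp, hrest⟩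

lemma key_bound {V : Type*} (E : Set (V × V)) (w : V → V → ℝ≥0∞) (a b y : V) :
    ∀ (n : ℕ) (p : List V), p.length ≤ n → ∀ s : V,
      IsPathIn (E ∪ {(a, b)}) s y p →
      min (spCost E w s y) (spCost E w s a + w a b + spCost E w b y) ≤ pathCost w s p := by
  intro n
  induction n with
  | zero =>
    intro p hlen s hp
    have hp0 : p = [] := List.length_eq_zero_iff.1 (Nat.le_zero.1 hlen)
    subst hp0
    have hy : s = y := by simpa [List.getLast] using hp.2
    subst hy
    have h0 : spCost E w s s ≤ pathCost w s ([] : List V) :=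
      iInf_le _ (⟨[], List.Chain.nil, by simp [List.getLast]⟩ : {p : List V // IsPathIn E s s p})
    exact le_trans (min_le_left _ _) h0
  | succ n ih =>
    intro p hlen s hp
    obtain ⟨hchain, hlast⟩ := hp
    rcases chain_decomp E a b p s hchain with hc | ⟨q, r, rfl, hq, hla, hr⟩
    · exact le_trans (min_le_left _ _) (iInf_le _ (⟨p, hc, hlast⟩ : {p : List V // IsPathIn E s y p}))
    · have hlast_r : (b :: r).getLast (by simp) = y := by
        have : ((s :: q) ++ b :: r).getLast (by simp) = y := by
          simpa using hlast
        rwa [List.getLast_append_of_ne_nil (l := s :: q) (l' := b :: r) _ (by simp)] at this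
      have hlen_r : r.length ≤ n := by
        have := hlen
        simp only [List.length_append, List.length_cons] at this
        omega
      have h2 : spCost E w b y ≤ pathCost w b r := by
        have hr' := ih r hlen_r b ⟨hr, hlast_r⟩
        have hmin : min (spCost E w b y) (spCost E w b a + w a b + spCost E w b y)
            = spCost E w b y := min_eq_left le_add_self
        rwa [hmin] at hr'
      have h1 : spCost E w s a ≤ pathCost w s q := iInf_le _ (⟨q, hq, hla⟩ : {p : List V // IsPathIn E s a p})
      have hcost : pathCost w s (q ++ b :: r) = pathCost w s q + w a b + pathCost w b r := by
        rw [pathCost_append w q s (b :: r), hla]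
        simp [pathCost, add_assoc]
      rw [hcost]
      refine le_trans (min_le_right _ _) ?_
      exact add_le_add (add_le_add h1 le_rfl) h2

theorem spCost_insert_edge {V : Type*} [Fintype V]
    (E : Set (V × V)) (w : V → V → ℝ≥0∞) (a b : V) :
    ∀ s y : V,
      spCost (E ∪ {(a, b)}) w s y =
        min (spCost E w s y) (spCost E w s a + w a b + spCost E w b y) := by
  intro s y
  refine le_antisymm (le_min ?_ ?_) ?_
  · -- monotonicity
    refine le_iInf ?_
    rintro ⟨p, hc, hl⟩
    exact iInf_le _ (⟨p, List.IsChain.imp (fun x y h => Or.inl h) hc, hl⟩ :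
      {p : List V // IsPathIn (E ∪ {(a, b)}) s y p})
  · -- path through the new edge
    have hconstr : ∀ (q : {p : List V // IsPathIn E s a p})
        (r : {p : List V // IsPathIn E b y p}),
        spCost (E ∪ {(a, b)}) w s y ≤ pathCost w s q.val + w a b + pathCost w b r.val := by
      rintro ⟨q, hq, hqa⟩ ⟨r, hr, hry⟩
      have hchain : List.Chain (fun x y => (x, y) ∈ E ∪ {(a, b)}) s (q ++ b :: r) := by
        refine List.isChain_cons_split.2 ⟨?_, List.IsChain.imp (fun x y h => Or.inl h) hr⟩
        refine chain_snoc _ q s b (List.IsChain.imp (fun x y h => Or.inl h) hq) ?_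
        rw [hqa]; exact Or.inr rfl
      have hlast : (s :: (q ++ b :: r)).getLast (by simp) = y := by
        have : ((s :: q) ++ b :: r).getLast (by simp) = y := by
          rw [List.getLast_append_of_ne_nil (l := s :: q) (l' := b :: r) _ (by simp)]
          exact hry
        simpa using this
      have hcost : pathCost w s (q ++ b :: r) = pathCost w s q + w a b + pathCost w b r := by
        rw [pathCost_append w q s (b :: r), hqa]
        simp [pathCost, add_assoc]
      have := iInf_le (fun p : {p : List V // IsPathIn (E ∪ {(a, b)}) s y p} =>
        pathCost w s p.val)
        (⟨q ++ b :: r, hchain, hlast⟩ : {p : List V // IsPathIn (E ∪ {(a, b)}) s y p})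
      rwa [hcost] at this
    simp only [spCost]
    rw [ENNReal.iInf_add, ENNReal.iInf_add]
    refine le_iInf fun q => ?_
    rw [ENNReal.add_iInf]
    exact le_iInf fun r => hconstr q r
  · refine le_iInf ?_
    rintro ⟨p, hp⟩
    exact key_bound E w a b y p.length p le_rfl s hp
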